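/- Let X be a Banach space, f : X → ℝ ∪ {+∞}, and x̄ ∈ X with f(x̄) = 0. If f_+ is lower semicontinuous on a neighbourhood of x̄, then the error bound modulus of f at x̄ equals the uniform strict slope: Er f(x̄) = \overline{|∇f|}^◇(x̄). -/

import Mathlib

open Filter Metric Topology ENNReal
set_option linter.unusedSectionVars false
set_option linter.unusedVariables false


/-- The "positive part" of an extended real, as an element of `ℝ≥0∞`. -/
noncomputable def ePlus (a : EReal) : ℝ≥0∞ := if a = ⊤ then ⊤ else ENNReal.ofReal a.toReal

lemma ePlus_top : ePlus ⊤ = ⊤ := rfl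

lemma ePlus_of_ne_top {a : EReal} (h : a ≠ ⊤) : ePlus a = ENNReal.ofReal a.toReal := if_neg h

lemma ePlus_bot : ePlus ⊥ = 0 := by simp [ePlus]

lemma ePlus_nonpos {a : EReal} (h : a ≤ 0) : ePlus a = 0 := by
  have ht : a ≠ ⊤ := by rintro rfl; exact absurd h (by simp)
  rw [ePlus_of_ne_top ht, ENNReal.ofReal_eq_zero]
  rcases eq_or_ne a ⊥ with rfl | hb
  · simp
  · have := EReal.toReal_le_toReal h hb (by simp)
    simpa using this

lemma ePlus_mono : Monotone ePlus := by
  intro a b hab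
  rcases eq_or_ne b ⊤ with rfl | hbt
  · simp [ePlus_top]
  have hat : a ≠ ⊤ := fun h => hbt (top_le_iff.mp (h ▸ hab))
  rw [ePlus_of_ne_top hat, ePlus_of_ne_top hbt]
  rcases eq_or_ne a ⊥ with rfl | hab'
  · simp only [EReal.toReal_bot, ENNReal.ofReal_zero, zero_le]
  · exact ENNReal.ofReal_le_ofReal (EReal.toReal_le_toReal hab hab' hbt)

lemma ePlus_pos {a : EReal} (h : 0 < a) : 0 < ePlus a := by
  rcases eq_or_ne a ⊤ with rfl | ht
  · simp [ePlus_top]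
  · rw [ePlus_of_ne_top ht]
    have hb : a ≠ ⊥ := ne_bot_of_gt h
    have : 0 < a.toReal := by
      rw [← EReal.coe_toReal ht hb] at h
      exact_mod_cast h
    exact ENNReal.ofReal_pos.mpr this

lemma ePlus_lt_top {a : EReal} (h : a ≠ ⊤) : ePlus a < ⊤ := by
  rw [ePlus_of_ne_top h]; exact ENNReal.ofReal_lt_top

lemma ePlus_lt_coe {a : EReal} (ht : a ≠ ⊤) {ρ : ℝ} (h : ePlus a < ENNReal.ofReal ρ) :
    a < (ρ : EReal) := by
  have hρ : 0 < ρ := ENNReal.ofReal_pos.mp (lt_of_le_of_lt (zero_le) h)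
  rcases eq_or_ne a ⊥ with rfl | hb
  · exact bot_lt_iff_ne_bot.mpr (by simp)
  rw [← EReal.coe_toReal ht hb]
  rw [ePlus_of_ne_top ht] at h
  rcases le_or_gt a.toReal 0 with h' | h'
  · exact_mod_cast lt_of_le_of_lt h' hρ
  · exact_mod_cast (ENNReal.ofReal_lt_ofReal_iff_of_nonneg h'.le).mp h

lemma ePlus_sub_le {a b : EReal} (hb : 0 ≤ b) {c : ℝ≥0∞} (h : ePlus a ≤ ePlus b + c) :
    ePlus (a - b) ≤ c := by
  rcases eq_or_ne b ⊤ with rfl | hbt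
  · rw [EReal.sub_top, ePlus_bot]; exact zero_le
  have hbb : b ≠ ⊥ := fun h' => by simp [h'] at hb
  rcases eq_or_ne a ⊤ with rfl | hat
  · rw [ePlus_top, top_le_iff] at h
    have : c = ⊤ := by
      rcases ENNReal.add_eq_top.mp h with h' | h'
      · exact absurd h' (ePlus_lt_top hbt).ne
      · exact h'
    simp [this]
  rcases eq_or_ne a ⊥ with rfl | hab
  · rw [EReal.bot_sub, ePlus_bot]; exact zero_le
  -- a, b both real
  rcases le_or_gt a b with hle | hlt
  · have : a - b ≤ 0 := by
      calc a - b ≤ b - b := EReal.sub_le_sub hle le_rfl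
        _ = 0 := by
          rw [← EReal.coe_toReal hbt hbb]
          exact_mod_cast sub_self _
    rw [ePlus_nonpos this]; exact zero_le
  have htb : 0 ≤ b.toReal := by
    have := EReal.toReal_le_toReal hb (by simp) hbt
    simpa using this
  have hta : b.toReal ≤ a.toReal := EReal.toReal_le_toReal hlt.le hbb hat
  have hsub : (a - b) = ((a.toReal - b.toReal : ℝ) : EReal) := by
    rw [← EReal.coe_toReal hat hab, ← EReal.coe_toReal hbt hbb]
    exact_mod_cast (EReal.coe_sub _ _).symm
  rw [hsub, ePlus_of_ne_top (by exact_mod_cast EReal.coe_ne_top _), EReal.toReal_coe]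
  rw [ePlus_of_ne_top hat, ePlus_of_ne_top hbt] at h
  have key : ENNReal.ofReal a.toReal
      = ENNReal.ofReal b.toReal + ENNReal.ofReal (a.toReal - b.toReal) := by
    rw [← ENNReal.ofReal_add htb (by linarith)]
    ring_nf
  rw [key] at h
  exact (WithTop.add_le_add_iff_left (ENNReal.ofReal_ne_top)).mp h


lemma ekeland_enn {Y : Type*} [MetricSpace Y] [CompleteSpace Y] {s : Set Y} (hs : IsClosed s)
    (g : Y → ℝ≥0∞)
    (hg : ∀ y ∈ s, ∀ C < g y, ∀ᶠ u in 𝓝[s] y, C < g u)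
    (x : Y) (hxs : x ∈ s) (hx : g x ≠ ⊤) {c : ℝ≥0∞} (hc0 : c ≠ 0) (hct : c ≠ ⊤) :
    ∃ v ∈ s, g v + c * edist v x ≤ g x ∧ ∀ u ∈ s, g v ≤ g u + c * edist u v := by
  classical
  set D : Y → Set Y := fun w => {u | u ∈ s ∧ g u + c * edist u w ≤ g w} with hD
  have hself : ∀ w ∈ s, w ∈ D w := fun w hw => ⟨hw, by simp⟩
  have hgle : ∀ {w u}, u ∈ D w → g u ≤ g w := fun h => le_trans (le_add_right le_rfl) h.2
  have htrans : ∀ {w u t}, u ∈ D w → t ∈ D u → t ∈ D w := by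
    intro w u t hu ht
    refine ⟨ht.1, ?_⟩
    calc g t + c * edist t w ≤ g t + c * (edist t u + edist u w) := by
          gcongr
          exact edist_triangle _ _ _
      _ = (g t + c * edist t u) + c * edist u w := by ring
      _ ≤ g u + c * edist u w := add_le_add_left ht.2 _
      _ ≤ g w := hu.2
  have hchoice : ∀ (n : ℕ) (w : Y), ∃ u, w ∈ s → g w ≠ ⊤ →
      u ∈ D w ∧ g u < (⨅ t ∈ D w, g t) + 2⁻¹ ^ n := by
    intro n w
    by_cases hw : w ∈ s ∧ g w ≠ ⊤
    · have h1 : (⨅ t ∈ D w, g t) ≤ g w := iInf₂_le w (hself w hw.1)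
      have hne : (⨅ t ∈ D w, g t) ≠ ⊤ := (lt_of_le_of_lt h1 hw.2.lt_top).ne
      have hlt : (⨅ t ∈ D w, g t) < (⨅ t ∈ D w, g t) + 2⁻¹ ^ n :=
        ENNReal.lt_add_right hne (pow_ne_zero n (by simp))
      obtain ⟨u, hu⟩ := iInf_lt_iff.mp hlt
      obtain ⟨hu1, hu2⟩ := iInf_lt_iff.mp hu
      exact ⟨u, fun _ _ => ⟨hu1, hu2⟩⟩
    · exact ⟨w, fun h1 h2 => absurd ⟨h1, h2⟩ hw⟩
  choose next hnext using hchoice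
  let seq : ℕ → Y := fun n => Nat.rec x (fun n w => next n w) n
  have hseq0 : seq 0 = x := rfl
  have hbase : ∀ n, seq n ∈ s ∧ g (seq n) ≠ ⊤ := by
    intro n
    induction n with
    | zero => exact ⟨hxs, hx⟩
    | succ n ih =>
      have h := hnext n (seq n) ih.1 ih.2
      exact ⟨h.1.1, (lt_of_le_of_lt (hgle h.1) ih.2.lt_top).ne⟩
  have hstep : ∀ n, seq (n+1) ∈ D (seq n) ∧
      g (seq (n+1)) < (⨅ t ∈ D (seq n), g t) + 2⁻¹ ^ n :=
    fun n => hnext n (seq n) (hbase n).1 (hbase n).2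
  have hmem : ∀ n m, n ≤ m → seq m ∈ D (seq n) := by
    intro n m h
    induction h with
    | refl => exact hself _ (hbase n).1
    | step h ih => exact htrans ih (hstep _).1
  have hkey : ∀ n u, u ∈ D (seq (n+1)) → edist u (seq (n+1)) ≤ 2⁻¹ ^ n / c := by
    intro n u hu
    have huDn : u ∈ D (seq n) := htrans (hstep n).1 hu
    have hIle : (⨅ t ∈ D (seq n), g t) ≤ g u := iInf₂_le u huDn
    have hut : g u ≠ ⊤ := (lt_of_le_of_lt (hgle hu) (hbase (n+1)).2.lt_top).ne
    have hlt : g u + c * edist u (seq (n+1)) < g u + 2⁻¹ ^ n :=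
      lt_of_le_of_lt hu.2 (lt_of_lt_of_le (hstep n).2 (add_le_add_left hIle _))
    have hfin := (ENNReal.add_lt_add_iff_left hut).mp hlt
    rw [ENNReal.le_div_iff_mul_le (Or.inl hc0) (Or.inl hct), mul_comm]
    exact hfin.le
  have h2 : (2 : ℝ≥0∞) * 2⁻¹ = 1 := ENNReal.mul_inv_cancel (by norm_num) (by norm_num)
  have hC : CauchySeq seq := by
    apply cauchySeq_of_edist_le_geometric 2⁻¹ (g x / c + 2 / c)
      (by simp [ENNReal.inv_lt_one])
      (by
        refine ENNReal.add_ne_top.mpr ⟨?_, ?_⟩ <;>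
          exact (ENNReal.div_lt_top (by first | exact hx | norm_num) hc0).ne)
    intro n
    cases n with
    | zero =>
      have h1 : seq 1 ∈ D (seq 0) := (hstep 0).1
      have : c * edist (seq 1) (seq 0) ≤ g x := by
        have := h1.2
        rw [hseq0] at this ⊢
        exact le_trans (le_add_left le_rfl) this
      have he : edist (seq 0) (seq 1) ≤ g x / c := by
        rw [edist_comm, ENNReal.le_div_iff_mul_le (Or.inl hc0) (Or.inl hct), mul_comm]
        exact this
      calc edist (seq 0) (seq 1) ≤ g x / c := he
        _ ≤ (g x / c + 2 / c) * 2⁻¹ ^ 0 := by simp [le_add_right]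
    | succ k =>
      have := hkey k (seq (k+2)) (hstep (k+1)).1
      rw [edist_comm]
      calc edist (seq (k+2)) (seq (k+1)) ≤ 2⁻¹ ^ k / c := this
        _ = (2 / c) * 2⁻¹ ^ (k+1) := by
            rw [pow_succ, div_eq_mul_inv, div_eq_mul_inv]
            calc (2⁻¹:ℝ≥0∞)^k * c⁻¹ = 1 * (2⁻¹^k * c⁻¹) := (one_mul _).symm
              _ = (2 * 2⁻¹) * (2⁻¹^k * c⁻¹) := by rw [h2]
              _ = 2 * c⁻¹ * (2⁻¹^k * 2⁻¹) := by ring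
        _ ≤ (g x / c + 2 / c) * 2⁻¹ ^ (k+1) := by gcongr; exact le_add_self
  obtain ⟨v, hv⟩ := cauchySeq_tendsto_of_complete hC
  have hvs : v ∈ s := hs.mem_of_tendsto hv (Eventually.of_forall fun n => (hbase n).1)
  have hcont : ∀ w : Y, Continuous (fun u => c * edist u w) :=
    fun w => (ENNReal.continuous_const_mul hct).comp (continuous_id.edist continuous_const)
  have hvD : ∀ n, v ∈ D (seq n) := by
    intro n
    refine ⟨hvs, ?_⟩
    by_contra hcon
    push_neg at hcon
    set w := seq n with hw
    have hwt : g w ≠ ⊤ := (hbase n).2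
    obtain ⟨C', hC'ev, hC'gt⟩ : ∃ C' : ℝ≥0∞, (∀ᶠ u in 𝓝[s] v, C' ≤ g u) ∧
        g w < C' + c * edist v w := by
      rcases lt_or_ge (g w) (c * edist v w) with hcase | hcase
      · exact ⟨0, Eventually.of_forall fun _ => zero_le, by simpa using hcase⟩
      · have hsub : g w - c * edist v w < g v := by
          rw [ENNReal.sub_lt_iff_lt_right (ne_top_of_le_ne_top hwt hcase) hcase]; exact hcon
        obtain ⟨C', h1, h2⟩ := exists_between hsub
        refine ⟨C', (hg v hvs C' h2).mono (fun u hu => hu.le), ?_⟩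
        rwa [ENNReal.sub_lt_iff_lt_right (ne_top_of_le_ne_top hwt hcase) hcase] at h1
    have hev2 : ∀ᶠ u in 𝓝[s] v, g w < C' + c * edist u w := by
      have ht : Tendsto (fun u => C' + c * edist u w) (𝓝[s] v) (𝓝 (C' + c * edist v w)) :=
        ((continuous_const.add (hcont w)).tendsto v).mono_left nhdsWithin_le_nhds
      exact ht.eventually_const_lt hC'gt
    have hev : ∀ᶠ u in 𝓝[s] v, g w < g u + c * edist u w :=
      (hC'ev.and hev2).mono (fun u hu => lt_of_lt_of_le hu.2 (add_le_add_left hu.1 _))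
    have hseqtend : Tendsto seq atTop (𝓝[s] v) :=
      tendsto_nhdsWithin_iff.mpr ⟨hv, Eventually.of_forall fun n => (hbase n).1⟩
    obtain ⟨m, hm1, hm2⟩ := ((hseqtend.eventually hev).and (eventually_ge_atTop n)).exists
    exact absurd (hmem n m hm2).2 (not_le.mpr hm1)
  refine ⟨v, hvs, by simpa [hseq0] using (hvD 0).2, ?_⟩
  intro u hu
  by_contra hcon
  push_neg at hcon
  have huDv : u ∈ D v := ⟨hu, hcon.le⟩
  have huDn : ∀ n, u ∈ D (seq n) := fun n => htrans (hvD n) huDv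
  have t1 : Tendsto (fun n : ℕ => (2⁻¹ : ℝ≥0∞) ^ n / c) atTop (𝓝 0) := by
    have hp : ((2 : ℝ≥0∞))⁻¹ < 1 := by simp [ENNReal.inv_lt_one]
    have := ENNReal.Tendsto.mul_const (ENNReal.tendsto_pow_atTop_nhds_zero_of_lt_one hp)
      (b := c⁻¹) (Or.inr (ENNReal.inv_ne_top.mpr hc0))
    simpa [div_eq_mul_inv] using this
  have t2 : Tendsto (fun n : ℕ => edist (seq (n+1)) v) atTop (𝓝 0) := by
    have := Tendsto.edist (hv.comp (tendsto_add_atTop_nat 1)) (tendsto_const_nhds (x := v))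
    simpa using this
  have hlim : Tendsto (fun n : ℕ => 2⁻¹ ^ n / c + edist (seq (n+1)) v) atTop (𝓝 0) := by
    simpa using t1.add t2
  have hle : edist u v ≤ 0 := by
    refine ge_of_tendsto hlim (Eventually.of_forall fun n => ?_)
    calc edist u v ≤ edist u (seq (n+1)) + edist (seq (n+1)) v := edist_triangle _ _ _
      _ ≤ 2⁻¹ ^ n / c + edist (seq (n+1)) v :=
          add_le_add_left (hkey n u (huDn (n+1))) _
  have huv : u = v := by
    have : edist u v = 0 := le_antisymm hle (zero_le)
    exact edist_eq_zero.mp this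
  rw [huv] at hcon
  simp at hcon


variable {X : Type*} [NormedAddCommGroup X] [NormedSpace ℝ X] [CompleteSpace X]

/-- The nonlocal slope `|∇f|^◇(x) := sup_{u≠x} [f(x) − f₊(u)]₊ / d(u,x)`. -/
noncomputable def nlSlope (f : X → EReal) (x : X) : ℝ≥0∞ :=
  ⨆ (u : X) (_ : u ≠ x), ePlus (f x - max (f u) 0) / ENNReal.ofReal (dist u x)

/-- The uniform strict slope `\overline{|∇f|}^◇(x̄) := liminf_{x→x̄, f(x)↓0} |∇f|^◇(x)`,
realized as the limit (= supremum) as `ρ↓0` of the infimum of `|∇f|^◇(x)` over all `x` with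
`‖x−x̄‖ < ρ` and `0 < f(x) < ρ` (infimum of the empty set is `+∞`). -/
noncomputable def uStrictSlope (f : X → EReal) (x₀ : X) : ℝ≥0∞ :=
  ⨆ (ρ : ℝ) (_ : 0 < ρ),
    ⨅ (x : X) (_ : ‖x - x₀‖ < ρ ∧ 0 < f x ∧ f x < (ρ : EReal)), nlSlope f x

/-- The error bound modulus `Er f(x̄) := liminf_{x→x̄, f(x)>0} f(x)/d(x, S(f))`,
with `S(f) := {x : f(x) ≤ 0}`. -/
noncomputable def erMod (f : X → EReal) (x₀ : X) : ℝ≥0∞ :=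
  ⨆ (δ : ℝ) (_ : 0 < δ),
    ⨅ (x : X) (_ : dist x x₀ < δ ∧ 0 < f x),
      ePlus (f x) / EMetric.infEdist x {z | f z ≤ 0}

lemma lsc_ePlus_aux {f : X → EReal} {U : Set X}
    (hU : LowerSemicontinuousOn (fun u => max (f u) 0) U) {s : Set X} (hsU : s ⊆ U) :
    ∀ y ∈ s, ∀ C < ePlus (max (f y) 0), ∀ᶠ u in 𝓝[s] y, C < ePlus (max (f u) 0) := by
  intro y hy C hC
  have hCt : C ≠ ⊤ := hC.ne_top
  obtain ⟨t, ht0, htlt, htC⟩ : ∃ t : ℝ, 0 < t ∧ (t : EReal) < max (f y) 0 ∧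
      C < ENNReal.ofReal t := by
    rcases eq_or_ne (max (f y) 0) ⊤ with htop | hne
    · refine ⟨C.toReal + 1, by positivity, ?_, ?_⟩
      · rw [htop]; exact EReal.coe_lt_top _
      · calc C = ENNReal.ofReal C.toReal := (ENNReal.ofReal_toReal hCt).symm
          _ < ENNReal.ofReal (C.toReal + 1) := by
              rw [ENNReal.ofReal_lt_ofReal_iff (by positivity)]; linarith
    · have hbb : max (f y) 0 ≠ ⊥ := ne_bot_of_le_ne_bot (by simp) (le_max_right _ _)
      rw [ePlus_of_ne_top hne] at hC
      have hty : 0 < (max (f y) 0).toReal := by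
        by_contra h
        push_neg at h
        rw [ENNReal.ofReal_eq_zero.mpr h] at hC
        exact absurd hC (by simp)
      have hCr : C.toReal < (max (f y) 0).toReal := by
        have := hC
        rw [← ENNReal.ofReal_toReal hCt] at this
        exact (ENNReal.ofReal_lt_ofReal_iff hty).mp this
      have hC0 : 0 ≤ C.toReal := ENNReal.toReal_nonneg
      refine ⟨(C.toReal + (max (f y) 0).toReal) / 2, by linarith, ?_, ?_⟩
      · conv_rhs => rw [← EReal.coe_toReal hne hbb]
        exact EReal.coe_lt_coe_iff.mpr (by linarith)
      · calc C = ENNReal.ofReal C.toReal := (ENNReal.ofReal_toReal hCt).symm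
          _ < ENNReal.ofReal ((C.toReal + (max (f y) 0).toReal) / 2) := by
              rw [ENNReal.ofReal_lt_ofReal_iff (by linarith)]; linarith
  have hev := hU y (hsU hy) _ htlt
  have hev' := hev.filter_mono (nhdsWithin_mono y hsU)
  refine hev'.mono fun u hu => lt_of_lt_of_le htC ?_
  calc ENNReal.ofReal t = ePlus ((t : ℝ) : EReal) := by
        rw [ePlus_of_ne_top (by simp), EReal.toReal_coe]
    _ ≤ ePlus (max (f u) 0) := ePlus_mono hu.le


/-- if `X` is a Banach space and `f₊` is lower semicontinuous on a
neighbourhood of `x̄`, then `Er f(x̄) = \overline{|∇f|}^◇(x̄)`. -/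
theorem erMod_eq_uStrictSlope (f : X → EReal) (x₀ : X)
    (hbot : ∀ u, f u ≠ ⊥) (hx₀ : f x₀ = 0)
    (hlsc : ∃ U ∈ 𝓝 x₀, LowerSemicontinuousOn (fun u => max (f u) 0) U) :
    erMod f x₀ = uStrictSlope f x₀ := by
  have hx₀S : x₀ ∈ {z : X | f z ≤ 0} := le_of_eq hx₀
  apply le_antisymm
  · -- erMod ≤ uStrictSlope
    rw [erMod, uStrictSlope]
    refine iSup₂_mono fun ρ hρ => ?_
    refine le_iInf₂ fun x hx => ?_
    obtain ⟨hx1, hx2, _⟩ := hx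
    refine iInf₂_le_of_le x ⟨by rwa [dist_eq_norm], hx2⟩ ?_
    -- pointwise: ePlus (f x) / infEdist ≤ nlSlope f x
    have hinf : EMetric.infEdist x {z : X | f z ≤ 0}
        = ⨅ y : {z : X // f z ≤ 0}, edist x y := by
      rw [EMetric.infEdist]
      exact (iInf_subtype'' _ _).symm
    have hSne : Nonempty {z : X // f z ≤ 0} := ⟨⟨x₀, hx₀S⟩⟩
    rw [hinf, div_eq_mul_inv, ENNReal.inv_iInf, ENNReal.mul_iSup]
    refine iSup_le fun y => ?_
    have hyx : (y : X) ≠ x := by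
      intro h
      exact absurd (h ▸ y.2) (not_le.mpr hx2)
    have hterm : ePlus (f x) * (edist x (y : X))⁻¹
        = ePlus (f x - max (f (y : X)) 0) / ENNReal.ofReal (dist (y : X) x) := by
      rw [max_eq_right y.2, sub_zero, div_eq_mul_inv, edist_comm, edist_dist]
    rw [hterm]
    exact le_iSup₂ (f := fun (u : X) (_ : u ≠ x) =>
      ePlus (f x - max (f u) 0) / ENNReal.ofReal (dist u x)) (y : X) hyx
  · -- uStrictSlope ≤ erMod
    by_contra hlt
    push_neg at hlt
    obtain ⟨γ, hγ1, hγ2⟩ := exists_between hlt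
    have hγt : γ ≠ ⊤ := hγ2.ne_top
    have hγ0 : γ ≠ 0 := ((zero_le).trans_lt hγ1).ne'
    rw [uStrictSlope] at hγ2
    obtain ⟨ρ, hρh⟩ := lt_iSup_iff.mp hγ2
    obtain ⟨hρ, hγρ⟩ := lt_iSup_iff.mp hρh
    obtain ⟨U, hUmem, hUlsc⟩ := hlsc
    obtain ⟨η, hη, hball⟩ := Metric.mem_nhds_iff.mp hUmem
    set G := γ.toReal with hG
    have hGpos : 0 < G := ENNReal.toReal_pos hγ0 hγt
    set δ := min (min (ρ / 3) (η / 3)) (ρ / (3 * (G + 1))) with hδdef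
    have hδpos : 0 < δ := by
      refine lt_min (lt_min (by linarith) (by linarith)) (by positivity)
    have hδρ3 : δ ≤ ρ / 3 := le_trans (min_le_left _ _) (min_le_left _ _)
    have hδη : δ ≤ η / 3 := le_trans (min_le_left _ _) (min_le_right _ _)
    have hδG : δ ≤ ρ / (3 * (G + 1)) := min_le_right _ _
    have hInf : (⨅ (x : X) (_ : dist x x₀ < δ ∧ 0 < f x),
        ePlus (f x) / EMetric.infEdist x {z | f z ≤ 0}) ≤ erMod f x₀ := by
      rw [erMod]
      exact le_iSup₂ (f := fun (δ : ℝ) (_ : 0 < δ) => ⨅ (x : X) (_ : dist x x₀ < δ ∧ 0 < f x),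
        ePlus (f x) / EMetric.infEdist x {z | f z ≤ 0}) δ hδpos
    obtain ⟨x, hx⟩ := iInf_lt_iff.mp (lt_of_le_of_lt hInf hγ1)
    obtain ⟨⟨hxd, hxf⟩, hxq⟩ := iInf_lt_iff.mp hx
    set I := EMetric.infEdist x {z : X | f z ≤ 0} with hIdef
    have hIle : I ≤ edist x x₀ := EMetric.infEdist_le_edist_of_mem hx₀S
    have hIt : I ≠ ⊤ := (lt_of_le_of_lt hIle (edist_lt_top x x₀)).ne
    have hI0 : I ≠ 0 := by
      intro h0
      rw [h0, ENNReal.div_zero (ePlus_pos hxf).ne'] at hxq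
      exact absurd hxq not_top_lt
    have hat : ePlus (f x) ≠ ⊤ := by
      intro h
      rw [h, ENNReal.top_div_of_ne_top hIt] at hxq
      exact absurd hxq not_top_lt
    have hfxt : f x ≠ ⊤ := fun h => hat (by rw [h]; rfl)
    obtain ⟨σ, hσ1, hσ2⟩ := exists_between hxq
    have hσ0 : σ ≠ 0 := ((zero_le).trans_lt hσ1).ne'
    have hσt : σ ≠ ⊤ := (hσ2.trans_le le_top).ne
    have hkey : ePlus (f x) < σ * I := (ENNReal.div_lt_iff (Or.inl hI0) (Or.inl hIt)).mp hσ1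
    set r := I.toReal with hrdef
    have hrpos : 0 < r := ENNReal.toReal_pos hI0 hIt
    have hIr : I = ENNReal.ofReal r := (ENNReal.ofReal_toReal hIt).symm
    have hrle : r ≤ dist x x₀ := by
      have := ENNReal.toReal_mono (edist_lt_top x x₀).ne hIle
      rwa [edist_dist, ENNReal.toReal_ofReal dist_nonneg] at this
    have hsub : Metric.closedBall x r ⊆ U := by
      intro y hy
      apply hball
      have h1 : dist y x ≤ r := Metric.mem_closedBall.mp hy
      have h3 := dist_triangle y x x₀
      exact Metric.mem_ball.mpr (by linarith)
    set g : X → ℝ≥0∞ := fun u => ePlus (max (f u) 0) with hgdef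
    have hgx : g x = ePlus (f x) := by
      rw [hgdef]; simp only [max_eq_left hxf.le]
    have hlscball := lsc_ePlus_aux hUlsc hsub
    obtain ⟨v, hvball, hv1, hv2⟩ := ekeland_enn Metric.isClosed_closedBall g hlscball x
      (Metric.mem_closedBall_self hrpos.le) (by rw [hgx]; exact hat) hσ0 hσt
    have hvx : σ * edist v x < σ * I :=
      lt_of_le_of_lt (le_trans (le_add_left le_rfl) hv1) (by rw [hgx]; exact hkey)
    have hvxI : edist v x < I := (ENNReal.mul_lt_mul_iff_right hσ0 hσt).mp hvx
    have hfv : (0 : EReal) < f v := by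
      by_contra h
      push_neg at h
      have : I ≤ edist x v := EMetric.infEdist_le_edist_of_mem h
      rw [edist_comm] at this
      exact absurd hvxI (not_lt.mpr this)
    have hgveq : g v = ePlus (f v) := by
      rw [hgdef]; simp only [max_eq_left hfv.le]
    have hgv : ePlus (f v) ≤ ePlus (f x) := by
      rw [← hgveq, ← hgx]
      exact le_trans (le_add_right le_rfl) hv1
    have haρ : ePlus (f x) < ENNReal.ofReal ρ := by
      calc ePlus (f x) < σ * I := hkey
        _ ≤ γ * edist x x₀ := mul_le_mul' hσ2.le hIle
        _ ≤ γ * ENNReal.ofReal δ := by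
            gcongr
            rw [edist_dist]
            exact ENNReal.ofReal_le_ofReal hxd.le
        _ = ENNReal.ofReal (G * δ) := by
            rw [← ENNReal.ofReal_toReal hγt, ← hG, ← ENNReal.ofReal_mul hGpos.le]
        _ < ENNReal.ofReal ρ := by
            rw [ENNReal.ofReal_lt_ofReal_iff hρ]
            have h1 : G * δ ≤ G * (ρ / (3 * (G + 1))) :=
              mul_le_mul_of_nonneg_left hδG hGpos.le
            have h2 : G * (ρ / (3 * (G + 1))) < ρ := by
              rw [mul_div_assoc']
              rw [div_lt_iff₀ (by positivity)]
              nlinarith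
            linarith
    have hfvt : f v ≠ ⊤ := by
      intro h
      rw [h] at hgv
      exact absurd (lt_of_le_of_lt hgv (ePlus_lt_top hfxt)) (by simp [ePlus_top])
    have hfvρ : f v < (ρ : EReal) := ePlus_lt_coe hfvt (lt_of_le_of_lt hgv haρ)
    have hdvx : dist v x < r := by
      have h := hvxI
      rw [hIr, edist_dist] at h
      exact (ENNReal.ofReal_lt_ofReal_iff hrpos).mp h
    have hdist : ‖v - x₀‖ < ρ := by
      rw [← dist_eq_norm]
      have h3 := dist_triangle v x x₀
      linarith
    have hγv : γ < nlSlope f v :=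
      lt_of_lt_of_le hγρ (iInf₂_le v ⟨hdist, hfv, hfvρ⟩)
    have hns : nlSlope f v ≤ σ := by
      rw [nlSlope]
      refine iSup₂_le fun u hu => ?_
      have hdist0 : (0 : ℝ) < dist u v := dist_pos.mpr hu
      rw [ENNReal.div_le_iff (ENNReal.ofReal_pos.mpr hdist0).ne' ENNReal.ofReal_ne_top]
      by_cases hus : u ∈ Metric.closedBall x r
      · have h := hv2 u hus
        rw [hgveq, hgdef] at h
        rw [edist_dist] at h
        exact ePlus_sub_le (le_max_right _ _) h
      · have hout : r < dist u x := by
          simpa [Metric.mem_closedBall, not_le] using hus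
        have hm : ePlus (f v - max (f u) 0) ≤ ePlus (f v) := by
          apply ePlus_mono
          calc f v - max (f u) 0 ≤ f v - 0 := EReal.sub_le_sub le_rfl (le_max_right _ _)
            _ = f v := sub_zero _
        have hgvb : ePlus (f v) + σ * edist v x ≤ σ * ENNReal.ofReal r := by
          calc ePlus (f v) + σ * edist v x = g v + σ * edist v x := by rw [hgveq]
            _ ≤ g x := hv1
            _ = ePlus (f x) := hgx
            _ ≤ σ * I := hkey.le
            _ = σ * ENNReal.ofReal r := by rw [hIr]
        have hfinal : ePlus (f v) ≤ σ * ENNReal.ofReal (dist u v) := by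
          refine le_trans (ENNReal.le_sub_of_add_le_right
            (ENNReal.mul_ne_top hσt (edist_lt_top v x).ne) hgvb) ?_
          rw [tsub_le_iff_right, edist_dist]
          calc σ * ENNReal.ofReal r ≤ σ * ENNReal.ofReal (dist u v + dist v x) := by
                gcongr
                have := dist_triangle u v x
                linarith
            _ = σ * (ENNReal.ofReal (dist u v) + ENNReal.ofReal (dist v x)) := by
                rw [ENNReal.ofReal_add dist_nonneg dist_nonneg]
            _ = σ * ENNReal.ofReal (dist u v) + σ * ENNReal.ofReal (dist v x) := by ring
        exact le_trans hm hfinal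
    exact absurd hγv (not_lt.mpr (hns.trans hσ2.le))
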